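/- For every real number d, the tensor R = Π − 2Φ + d·Ψ satisfies R.R = 0. -/

import Mathlib

open scoped RealInnerProductSpace

noncomputable section

variable {V : Type*} [NormedAddCommGroup V] [InnerProductSpace ℝ V] [FiniteDimensional ℝ V]

/-- The orthogonal projection onto `D`, as a map `V → V`. -/
def projD (D : Submodule ℝ V) (X : V) : V := (D.orthogonalProjection X : V)

/-- The bilinear form `h(X,Y) = ⟪πX, πY⟫`. -/
def hForm (D : Submodule ℝ V) (X Y : V) : ℝ := ⟪projD D X, projD D Y⟫

/-- The 2-form `ω(X,Y) = h(JX, Y)`. -/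
def omForm (J : V →ₗ[ℝ] V) (D : Submodule ℝ V) (X Y : V) : ℝ := hForm D (J X) Y

/-- The standard Kähler curvature-type tensor `Π` of constant holomorphic sectional curvature. -/
def PiT (J : V →ₗ[ℝ] V) (U Vv W : V) : V :=
  (1/4 : ℝ) • (⟪Vv, W⟫ • U - ⟪U, W⟫ • Vv + ⟪J Vv, W⟫ • J U - ⟪J U, W⟫ • J Vv
    - (2 * ⟪J U, Vv⟫) • J W)

/-- The curvature-type tensor `Φ`. -/
def PhiT (J : V →ₗ[ℝ] V) (D : Submodule ℝ V) (U Vv W : V) : V :=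
  (1/8 : ℝ) • (⟪Vv, W⟫ • projD D U - ⟪U, W⟫ • projD D Vv
    + hForm D Vv W • U - hForm D U W • Vv
    + ⟪J Vv, W⟫ • projD D (J U) - ⟪J U, W⟫ • projD D (J Vv)
    + omForm J D Vv W • J U - omForm J D U W • J Vv
    - (2 * ⟪J U, Vv⟫) • projD D (J W) - (2 * omForm J D U Vv) • J W)

/-- The curvature-type tensor `Ψ(U,V)W = −ω(U,V)·J(πW)`. -/
def PsiT (J : V →ₗ[ℝ] V) (D : Submodule ℝ V) (U Vv W : V) : V :=
  -(omForm J D U Vv) • J (projD D W)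

/-- The derivation action of an endomorphism `A` on a bilinear form `T`. -/
def der2 (A : V → V) (T : V → V → ℝ) (X Y : V) : ℝ := -T (A X) Y - T X (A Y)

/-- The derivation action of an endomorphism `A` on a 4-multilinear form `T`. -/
def der4 (A : V → V) (T : V → V → V → V → ℝ) (X Y Z W : V) : ℝ :=
  -T (A X) Y Z W - T X (A Y) Z W - T X Y (A Z) W - T X Y Z (A W)

/-- The 4-form `S₀(X,Y,Z,W) = ⟪S(X,Y)Z, W⟫` associated with an endomorphism-valued 2-form. -/
def form4 (S : V → V → V → V) (X Y Z W : V) : ℝ := ⟪S X Y Z, W⟫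

/-- The 6-multilinear form `(R.S)(U,V,X,Y,Z,W) = (R(U,V).S₀)(X,Y,Z,W)`. -/
def dotRS (R S : V → V → V → V) (U Vv X Y Z W : V) : ℝ :=
  der4 (R U Vv) (form4 S) X Y Z W

/- ### Auxiliary lemmas -/

lemma projD_add' (D : Submodule ℝ V) (x y : V) :
    projD D (x + y) = projD D x + projD D y := by simp [projD]

lemma projD_sub' (D : Submodule ℝ V) (x y : V) :
    projD D (x - y) = projD D x - projD D y := by simp [projD]

lemma projD_smul' (D : Submodule ℝ V) (r : ℝ) (x : V) :
    projD D (r • x) = r • projD D x := by simp [projD]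

lemma projD_neg' (D : Submodule ℝ V) (x : V) : projD D (-x) = -projD D x := by simp [projD]

lemma projD_idem (D : Submodule ℝ V) (x : V) : projD D (projD D x) = projD D x := by
  simp [projD, Submodule.starProjection_eq_self_iff]

lemma projD_mem (D : Submodule ℝ V) (x : V) : projD D x ∈ D := by simp [projD]

lemma inner_projD (D : Submodule ℝ V) (x y : V) : ⟪projD D x, y⟫ = ⟪x, projD D y⟫ :=
  D.inner_starProjection_left_eq_right x y

section Aux
variable (J : V →ₗ[ℝ] V) (D : Submodule ℝ V) (hJ2 : ∀ X : V, J (J X) = -X)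
  (hJg : ∀ X Y : V, ⟪J X, J Y⟫ = ⟪X, Y⟫) (hJD : ∀ X ∈ D, J X ∈ D)

include hJ2 hJg in
omit [FiniteDimensional ℝ V] in
lemma innerJL (a b : V) : ⟪J a, b⟫ = -⟪a, J b⟫ := by
  have h1 := hJg a (J b); rw [hJ2, inner_neg_right] at h1; linarith [h1]

include hJ2 hJg hJD in
lemma projD_J (x : V) : projD D (J x) = J (projD D x) := by
  refine D.eq_starProjection_of_mem_of_inner_eq_zero (hJD _ (projD_mem D x)) ?_
  intro w hw
  have h2 : J x - J (projD D x) = J (x - projD D x) := by rw [map_sub]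
  rw [h2, innerJL J hJ2 hJg]
  have h3 := Submodule.sub_starProjection_mem_orthogonal (K := D) x
  rw [Submodule.mem_orthogonal] at h3
  rw [real_inner_comm]
  simpa [projD] using h3 _ (hJD w hw)

include hJ2 hJg in
omit [FiniteDimensional ℝ V] in
lemma symJ (a b : V) : ⟪b, J a⟫ = -⟪a, J b⟫ := by
  rw [real_inner_comm, innerJL J hJ2 hJg]

lemma symπ (a b : V) : ⟪b, projD D a⟫ = ⟪a, projD D b⟫ := by
  rw [← inner_projD, real_inner_comm]

include hJ2 hJg hJD in
lemma symπJ (a b : V) : ⟪b, J (projD D a)⟫ = -⟪a, J (projD D b)⟫ := by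
  rw [real_inner_comm, innerJL J hJ2 hJg, ← projD_J J D hJ2 hJg hJD, inner_projD,
    projD_J J D hJ2 hJg hJD]

/-- The full curvature-type tensor `R = Π − 2Φ + dΨ`. -/
def RT (J : V →ₗ[ℝ] V) (D : Submodule ℝ V) (d : ℝ) (P Q W0 : V) : V :=
  PiT J P Q W0 - (2 : ℝ) • PhiT J D P Q W0 + d • PsiT J D P Q W0

include hJ2 hJg hJD in
lemma RT_skew (d : ℝ) (U Vv Z W : V) :
    ⟪RT J D d U Vv Z, W⟫ = -⟪Z, RT J D d U Vv W⟫ := by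
  have nJ := innerJL J hJ2 hJg
  have nπJ := projD_J J D hJ2 hJg hJD
  simp only [RT, PiT, PhiT, PsiT, hForm, omForm,
    inner_add_left, inner_add_right, inner_sub_left, inner_sub_right,
    inner_neg_left, inner_neg_right, real_inner_smul_left, real_inner_smul_right,
    map_add, map_sub, map_smul, map_neg, neg_smul, smul_add, smul_sub, smul_neg,
    projD_add', projD_sub', projD_smul', projD_neg', projD_idem,
    hJ2, nπJ, nJ, inner_projD]
  simp only [real_inner_comm Vv U, real_inner_comm Z U, real_inner_comm Z Vv,
    real_inner_comm W U, real_inner_comm W Vv, real_inner_comm W Z,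
    symJ J hJ2 hJg U Vv, symJ J hJ2 hJg U Z, symJ J hJ2 hJg Vv Z,
    symJ J hJ2 hJg U W, symJ J hJ2 hJg Vv W, symJ J hJ2 hJg Z W,
    symπ D U Vv, symπ D U Z, symπ D Vv Z, symπ D U W, symπ D Vv W, symπ D Z W,
    symπJ J D hJ2 hJg hJD U Vv, symπJ J D hJ2 hJg hJD U Z, symπJ J D hJ2 hJg hJD Vv Z,
    symπJ J D hJ2 hJg hJD U W, symπJ J D hJ2 hJg hJD Vv W, symπJ J D hJ2 hJg hJD Z W]
  ring

include hJ2 hJg hJD in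
lemma RT_J (d : ℝ) (U Vv W : V) : RT J D d U Vv (J W) = J (RT J D d U Vv W) := by
  have nJ := innerJL J hJ2 hJg
  have nπJ := projD_J J D hJ2 hJg hJD
  simp only [RT, PiT, PhiT, PsiT, hForm, omForm,
    inner_add_left, inner_add_right, inner_sub_left, inner_sub_right,
    inner_neg_left, inner_neg_right, real_inner_smul_left, real_inner_smul_right,
    map_add, map_sub, map_smul, map_neg, neg_smul, smul_add, smul_sub, smul_neg,
    projD_add', projD_sub', projD_smul', projD_neg', projD_idem,
    hJ2, nπJ, nJ, inner_projD]
  module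

include hJ2 hJg hJD in
lemma RT_projD (d : ℝ) (U Vv W : V) :
    RT J D d U Vv (projD D W) = projD D (RT J D d U Vv W) := by
  have nJ := innerJL J hJ2 hJg
  have nπJ := projD_J J D hJ2 hJg hJD
  simp only [RT, PiT, PhiT, PsiT, hForm, omForm,
    inner_add_left, inner_add_right, inner_sub_left, inner_sub_right,
    inner_neg_left, inner_neg_right, real_inner_smul_left, real_inner_smul_right,
    map_add, map_sub, map_smul, map_neg, neg_smul, smul_add, smul_sub, smul_neg,
    projD_add', projD_sub', projD_smul', projD_neg', projD_idem,
    hJ2, nπJ, nJ, inner_projD]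
  module

include hJ2 hJg hJD in
lemma key (d : ℝ) (A : V → V)
    (hA1 : ∀ x y : V, ⟪A x, y⟫ = -⟪x, A y⟫)
    (hA2 : ∀ x : V, J (A x) = A (J x))
    (hA3 : ∀ x : V, projD D (A x) = A (projD D x))
    (X Y Z W : V) : der4 A (form4 (RT J D d)) X Y Z W = 0 := by
  have nJ := innerJL J hJ2 hJg
  have nπJ := projD_J J D hJ2 hJg hJD
  simp only [der4, form4, RT, PiT, PhiT, PsiT, hForm, omForm,
    inner_add_left, inner_add_right, inner_sub_left, inner_sub_right,
    inner_neg_left, inner_neg_right, real_inner_smul_left, real_inner_smul_right,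
    map_add, map_sub, map_smul, map_neg, neg_smul, smul_add, smul_sub, smul_neg,
    projD_add', projD_sub', projD_smul', projD_neg', projD_idem,
    hJ2, nπJ, hA2, hA3, nJ, hA1, inner_projD]
  ring

end Aux

theorem stmt_14 {V : Type*} [NormedAddCommGroup V] [InnerProductSpace ℝ V]
    [FiniteDimensional ℝ V]
    (J : V →ₗ[ℝ] V) (hJ2 : ∀ X : V, J (J X) = -X)
    (hJg : ∀ X Y : V, ⟪J X, J Y⟫ = ⟪X, Y⟫)
    (D : Submodule ℝ V) (hD2 : Module.finrank ℝ ↥D = 2)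
    (hJD : ∀ X ∈ D, J X ∈ D) :
    ∀ d : ℝ, ∀ U Vv X Y Z W : V,
      dotRS (fun P Q W0 => PiT J P Q W0 - (2 : ℝ) • PhiT J D P Q W0 + d • PsiT J D P Q W0)
        (fun P Q W0 => PiT J P Q W0 - (2 : ℝ) • PhiT J D P Q W0 + d • PsiT J D P Q W0) U Vv X Y Z W = 0 := by
  intro d U Vv X Y Z W
  show der4 (RT J D d U Vv) (form4 (RT J D d)) X Y Z W = 0
  exact key J D hJ2 hJg hJD d (RT J D d U Vv)
    (fun x y => RT_skew J D hJ2 hJg hJD d U Vv x y)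
    (fun x => (RT_J J D hJ2 hJg hJD d U Vv x).symm)
    (fun x => (RT_projD J D hJ2 hJg hJD d U Vv x).symm)
    X Y Z W
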